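/- Let F : T^Y → T^Z be a cover between trees of spheres, and let A = ]]v₁, v₂[[ be an annulus in T^Y (the intersection of the branches B_{v₁}(v₂) and B_{v₂}(v₁)) containing no critical leaf. Then F(A) is an annulus in T^Z, A is a connected component of F⁻¹(F(A)), and F(Ā) = F(A)‾. If moreover A contains no critical element at all, then F : A → F(A) and F : Ā → F(A)‾ are bijections. -/

import Mathlib

open scoped Classical

/-- `x` and `y` are on the same side of vertex `v` in the graph `G`
(there is a walk from `x` to `y` avoiding `v`). -/
def SameSide {V : Type*} (G : SimpleGraph V) (v x y : V) : Prop :=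
  ∃ p : G.Walk x y, v ∉ p.support

/-- The branch of `s` at the vertex `v`: the connected component of `G − {v}` containing `s`. -/
def Branch {V : Type*} (G : SimpleGraph V) (v s : V) : Set V :=
  {u | ∃ p : G.Walk s u, v ∉ p.support}

/-- The (open) annulus `]]v₁,v₂[[`, the intersection of the branches `B_{v₁}(v₂)` and
`B_{v₂}(v₁)`. -/
def Annulus {V : Type*} (G : SimpleGraph V) (v₁ v₂ : V) : Set V :=
  Branch G v₁ v₂ ∩ Branch G v₂ v₁

/-- `v` is a leaf of `G` (exactly one neighbour). -/
def IsLf {V : Type*} (G : SimpleGraph V) (v : V) : Prop := ∃! u, G.Adj v u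

/-- `A` is a connected component of the subset `S` of vertices of `G`. -/
def IsCompOf {V : Type*} (G : SimpleGraph V) (A S : Set V) : Prop :=
  A ⊆ S ∧
  (∀ a ∈ A, ∀ b ∈ A, ∃ p : G.Walk a b, ∀ x ∈ p.support, x ∈ S) ∧
  (∀ a ∈ A, ∀ u, (∃ p : G.Walk a u, ∀ x ∈ p.support, x ∈ S) → u ∈ A)

/-- A combinatorial model of a (holomorphic) cover `F : T^Y → T^Z` between trees of spheres:
a map of trees sending leaves to leaves and internal vertices to internal vertices, together
with local degrees `edeg` along edges and degrees `vdeg` of the sphere maps `f_v`, subject to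
the fiber-counting condition and the local Riemann–Hurwitz relation (all critical points of
`f_v` are at attaching points of edges, since `f_v : S_v − Y_v → S_{F v} − Z_{F v}` is a
covering map). -/
structure STCover (V W : Type*) [Fintype V] [Fintype W] where
  TY : SimpleGraph V
  TZ : SimpleGraph W
  treeY : TY.IsTree
  treeZ : TZ.IsTree
  valY : ∀ v : V, IsLf TY v ∨ (∃ a b c : V, a ≠ b ∧ b ≠ c ∧ a ≠ c ∧
    TY.Adj v a ∧ TY.Adj v b ∧ TY.Adj v c)
  F : V → W
  map_adj : ∀ {u v : V}, TY.Adj u v → TZ.Adj (F u) (F v)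
  map_leaf : ∀ v : V, IsLf TY v → IsLf TZ (F v)
  map_internal : ∀ v : V, ¬ IsLf TY v → ¬ IsLf TZ (F v)
  edeg : V → V → ℕ
  edeg_pos : ∀ {u v : V}, TY.Adj u v → 1 ≤ edeg u v
  edeg_symm : ∀ u v : V, edeg u v = edeg v u
  vdeg : V → ℕ
  vdeg_pos : ∀ v : V, 1 ≤ vdeg v
  fiber_sum : ∀ v : V, ∀ w' : W, ¬ IsLf TY v → TZ.Adj (F v) w' →
    ∑ u ∈ Finset.univ.filter (fun u => TY.Adj v u ∧ F u = w'), edeg v u = vdeg v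
  RH_local : ∀ v : V, ¬ IsLf TY v →
    ∑ u ∈ Finset.univ.filter (fun u => TY.Adj v u), (edeg v u - 1) = 2 * (vdeg v - 1)
  leaf_vdeg : ∀ v u : V, IsLf TY v → TY.Adj v u → vdeg v = edeg v u

/-- A critical leaf of a cover between trees of spheres. -/
def STCover.CritLeaf {V W : Type*} [Fintype V] [Fintype W] (C : STCover V W) (v : V) : Prop :=
  IsLf C.TY v ∧ 2 ≤ C.vdeg v

namespace Stmt8Aux

open SimpleGraph Walk

variable {V : Type*} {G : SimpleGraph V}

lemma mem_branch_self {v z : V} (h : z ≠ v) : z ∈ Branch G v z :=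
  ⟨Walk.nil, by simp [Ne.symm h]⟩

lemma center_not_mem {v s : V} : v ∉ Branch G v s := fun ⟨p, hp⟩ => hp p.end_mem_support

lemma ne_center {v s z : V} (h : z ∈ Branch G v s) : z ≠ v := by
  rintro rfl; exact center_not_mem h

lemma branch_eq {v s s' : V} (h : s' ∈ Branch G v s) : Branch G v s = Branch G v s' := by
  obtain ⟨w, hw⟩ := h
  ext y
  constructor
  · rintro ⟨w', hw'⟩
    exact ⟨w.reverse.append w', by
      rw [mem_support_append_iff, support_reverse, List.mem_reverse]; tauto⟩
  · rintro ⟨w', hw'⟩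
    exact ⟨w.append w', by rw [mem_support_append_iff]; tauto⟩

lemma mem_of_walk {v s z y : V} (h : z ∈ Branch G v s) (w : G.Walk z y)
    (hw : v ∉ w.support) : y ∈ Branch G v s := by
  obtain ⟨w', hw'⟩ := h
  exact ⟨w'.append w, by rw [mem_support_append_iff]; tauto⟩

lemma mem_of_adj {v s z y : V} (h : z ∈ Branch G v s) (ha : G.Adj z y) (hy : y ≠ v) :
    y ∈ Branch G v s :=
  mem_of_walk h (Walk.cons ha Walk.nil) (by
    have hz : v ≠ z := (ne_center h).symm
    simp only [support_cons, support_nil, List.mem_cons, List.not_mem_nil]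
    push_neg
    exact ⟨hz, Ne.symm hy, trivial⟩)

lemma avoid {v s y z t : V} (hy : y ∉ Branch G v s) (hz : z ∈ Branch G v s)
    (w : G.Walk z t) (hw : v ∉ w.support) : y ∉ w.support := fun hmem =>
  hy (mem_of_walk hz (w.takeUntil y hmem)
    (fun hv => hw (w.support_takeUntil_subset hmem hv)))

lemma separation {v s a b : V} (ha : a ∈ Branch G v s) (hb : b ∉ Branch G v s)
    (w : G.Walk a b) : v ∈ w.support := by
  by_contra hv
  exact hb (mem_of_walk ha w hv)

end Stmt8Aux

section TreeLemmas

variable {V : Type*} {G : SimpleGraph V}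

namespace Stmt8Aux
open SimpleGraph Walk

lemma path_support_subset (hT : G.IsTree) {x y : V} {p : G.Walk x y} (hp : p.IsPath)
    (w : G.Walk x y) : p.support ⊆ w.support := by
  have h1 := (hT.existsUnique_path x y).unique hp w.bypass_isPath
  rw [h1]
  exact w.support_bypass_subset

lemma not_mem_branch_of_adj (hT : G.IsTree) {v s s' : V} (hs : G.Adj v s) (hs' : G.Adj v s')
    (hne : s ≠ s') : s' ∉ Branch G v s := by
  rintro ⟨w, hw⟩
  have hb : v ∉ w.bypass.support := fun h => hw (w.support_bypass_subset h)
  have hP₂ : (Walk.cons hs w.bypass).IsPath := by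
    rw [Walk.cons_isPath_iff]
    exact ⟨w.bypass_isPath, hb⟩
  have hP₁ : (Walk.cons hs' Walk.nil).IsPath := by simp [hs'.ne]
  have := (hT.existsUnique_path v s').unique hP₂ hP₁
  have h2 := congrArg Walk.support this
  rw [support_cons, support_cons, support_nil, support_eq_cons w.bypass] at h2
  injection h2 with _ h3
  injection h3 with h4 _
  exact hne h4

lemma branch_disjoint (hT : G.IsTree) {v s s' z : V} (hs : G.Adj v s) (hs' : G.Adj v s')
    (hz : z ∈ Branch G v s) (hz' : z ∈ Branch G v s') : s = s' := by
  by_contra hne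
  have h1 : Branch G v s = Branch G v z := branch_eq hz
  have h2 : Branch G v s' = Branch G v z := branch_eq hz'
  have : s' ∈ Branch G v s := by
    rw [h1, ← h2]; exact mem_branch_self hs'.ne'
  exact not_mem_branch_of_adj hT hs hs' hne this

lemma exists_dir (hT : G.IsTree) {v s z : V} (hz : z ∈ Branch G v s) :
    ∃ t, G.Adj v t ∧ Branch G v s = Branch G v t := by
  have hzv : z ≠ v := ne_center hz
  obtain ⟨w⟩ := hT.isConnected.preconnected v z
  have hp := w.bypass_isPath
  cases hb : w.bypass with
  | nil => exact absurd rfl hzv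
  | cons h q =>
    rw [hb] at hp
    rw [Walk.cons_isPath_iff] at hp
    have hzq : z ∈ Branch G v _ := ⟨q, hp.2⟩
    exact ⟨_, h, (branch_eq hz).trans (branch_eq hzq).symm⟩

lemma annulus_adj_empty (hT : G.IsTree) {a t : V} (h : G.Adj a t) :
    Annulus G a t = ∅ := by
  ext z
  simp only [Annulus, Set.mem_inter_iff, Set.mem_empty_iff_false, iff_false, not_and]
  intro h1 h2
  obtain ⟨w, hw⟩ := h2
  have hza : z ≠ a := ne_center h1
  have hb : t ∉ w.bypass.support := fun hh => hw (w.support_bypass_subset hh)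
  have hp := w.bypass_isPath
  cases hbb : w.bypass with
  | nil => exact hza rfl
  | cons hadj q =>
    rw [hbb] at hp hb
    rw [Walk.cons_isPath_iff] at hp
    have hzq : z ∈ Branch G a _ := ⟨q, hp.2⟩
    have heq := branch_disjoint hT h hadj h1 hzq
    subst heq
    exact hb (by rw [support_cons]; exact List.mem_cons_of_mem _ q.start_mem_support)

end Stmt8Aux
end TreeLemmas

namespace Stmt8Aux
open SimpleGraph Walk

variable {V : Type*} {G : SimpleGraph V}

lemma annulus_sub (hT : G.IsTree) {a t b : V} (hat : G.Adj a t) (htb : t ≠ b)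
    (ha : a ∉ Branch G t b) : Annulus G t b ⊆ Annulus G a b := by
  rintro z ⟨h1, h2⟩
  have hab : a ≠ b := by
    rintro rfl
    exact ha (mem_branch_self hat.ne)
  constructor
  · obtain ⟨w, hw⟩ := h1
    exact ⟨w, avoid ha (mem_branch_self (Ne.symm htb)) w hw⟩
  · have ht : t ∈ Branch G b a :=
      ⟨Walk.cons hat Walk.nil, by
        simp only [support_cons, support_nil, List.mem_cons, List.not_mem_nil]
        push_neg
        exact ⟨Ne.symm hab, Ne.symm htb, trivial⟩⟩
    rw [branch_eq ht] at *
    exact h2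

lemma branch_to_annulus {c₁ c₂ y s : V} (hy : y ∈ Annulus G c₁ c₂) (hs : G.Adj y s)
    (h1 : c₁ ∉ Branch G y s) (h2 : c₂ ∉ Branch G y s) :
    Branch G y s ⊆ Annulus G c₁ c₂ := by
  intro z hz
  obtain ⟨w, hw⟩ := hz
  have hsb : s ∈ Branch G y s := mem_branch_self hs.ne'
  constructor
  · obtain ⟨W, hW⟩ := hy.1
    refine ⟨W.append (Walk.cons hs w), ?_⟩
    rw [mem_support_append_iff]
    push_neg
    refine ⟨hW, ?_⟩
    rw [support_cons]
    simp only [List.mem_cons]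
    push_neg
    exact ⟨Ne.symm (ne_center hy.1), avoid h1 hsb w hw⟩
  · obtain ⟨W, hW⟩ := hy.2
    refine ⟨W.append (Walk.cons hs w), ?_⟩
    rw [mem_support_append_iff]
    push_neg
    refine ⟨hW, ?_⟩
    rw [support_cons]
    simp only [List.mem_cons]
    push_neg
    exact ⟨Ne.symm (ne_center hy.2), avoid h2 hsb w hw⟩

lemma branch_mono (hT : G.IsTree) {v w u : V} (hvw : G.Adj v w) (hwu : G.Adj w u)
    (huv : u ≠ v) : Branch G w u ⊆ Branch G v w := by
  intro z hz
  obtain ⟨W, hW⟩ := hz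
  have hvB : v ∉ Branch G w u := not_mem_branch_of_adj hT hwu hvw.symm huv
  have hvW : v ∉ W.support := avoid hvB (mem_branch_self hwu.ne') W hW
  exact ⟨Walk.cons hwu W, by
    rw [support_cons]
    simp only [List.mem_cons]
    push_neg
    exact ⟨hvw.ne, hvW⟩⟩

lemma leaf_branch_singleton {v w : V} (hl : IsLf G w) (hadj : G.Adj v w) :
    Branch G v w = {w} := by
  ext z
  simp only [Set.mem_singleton_iff]
  constructor
  · rintro ⟨W, hW⟩
    cases W with
    | nil => rfl
    | cons h' Q =>
      obtain ⟨u₀, _, huniq⟩ := hl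
      have h1 := huniq _ h'
      have h2 := huniq _ hadj.symm
      have hcv := h1.trans h2.symm
      subst hcv
      exact absurd (by rw [support_cons]; exact List.mem_cons_of_mem _ Q.start_mem_support)
        hW
  · rintro rfl
    exact mem_branch_self hadj.ne'

lemma second_vertex (hT : G.IsTree) {v w x : V} (hadj : G.Adj v w)
    (hx : x ∈ Branch G v w) (hxw : x ≠ w) :
    ∃ u, G.Adj w u ∧ u ≠ v ∧ x ∈ Branch G w u := by
  have hx1 : x ∈ Branch G w x := mem_branch_self hxw
  obtain ⟨u, hu, heq⟩ := exists_dir hT hx1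
  refine ⟨u, hu, ?_, heq ▸ hx1⟩
  intro hueq
  have hxwv : x ∈ Branch G w v := hueq ▸ (heq ▸ hx1)
  have hmem : x ∈ Annulus G v w := ⟨hx, hxwv⟩
  rw [annulus_adj_empty hT hadj] at hmem
  exact hmem

lemma annulus_decomp (hT : G.IsTree) {a t b : V} (hat : G.Adj a t)
    (hb : b ∈ Branch G a t) (htb : t ≠ b) {z : V} (hz : z ∈ Annulus G a b) :
    z = t ∨ z ∈ Annulus G t b ∨
      ∃ s, G.Adj t s ∧ s ≠ a ∧ b ∉ Branch G t s ∧ z ∈ Branch G t s := by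
  have hzat : z ∈ Branch G a t := by rw [branch_eq hb]; exact hz.1
  have hba : b ≠ a := ne_center hb
  by_cases hzt : z = t
  · exact Or.inl hzt
  right
  have hz1 : z ∈ Branch G t z := mem_branch_self hzt
  obtain ⟨s, hs, heq⟩ := exists_dir hT hz1
  have hzs : z ∈ Branch G t s := heq ▸ hz1
  have hsa : s ≠ a := by
    intro hseq
    have hzs' : z ∈ Branch G t a := hseq ▸ hzs
    have hmem : z ∈ Annulus G a t := ⟨hzat, hzs'⟩
    rw [annulus_adj_empty hT hat] at hmem
    exact hmem
  by_cases hbs : b ∈ Branch G t s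
  · left
    constructor
    · exact (branch_eq hbs) ▸ hzs
    · have ht : t ∈ Branch G b a :=
        ⟨Walk.cons hat Walk.nil, by
          simp only [support_cons, support_nil, List.mem_cons, List.not_mem_nil]
          push_neg
          exact ⟨hba, Ne.symm htb, trivial⟩⟩
      rw [← branch_eq ht]
      exact hz.2
  · exact Or.inr ⟨s, hs, hsa, hbs, hzs⟩

lemma path_ends_ne {x y : V} {p : G.Walk x y} (hp : p.IsPath) (hl : 0 < p.length) :
    x ≠ y := by
  cases p with
  | nil => simp at hl
  | cons h q =>
    rw [Walk.cons_isPath_iff] at hp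
    rintro rfl
    exact hp.2 q.end_mem_support

lemma interior_mem_annulus {a b x : V} {p : G.Walk a b} (hp : p.IsPath)
    (hx : x ∈ p.support) (hxa : x ≠ a) (hxb : x ≠ b) : x ∈ Annulus G a b := by
  have hspec := p.take_spec hx
  have hnodup : ((p.takeUntil x hx).append (p.dropUntil x hx)).support.Nodup := by
    rw [hspec]; exact hp.support_nodup
  rw [support_append] at hnodup
  have hdisj := List.disjoint_of_nodup_append hnodup
  have hbt : b ∉ (p.takeUntil x hx).support := by
    intro hbmem
    have hbd : b ∈ (p.dropUntil x hx).support.tail := by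
      have : b ∈ (p.dropUntil x hx).support := (p.dropUntil x hx).end_mem_support
      rw [support_eq_cons, List.mem_cons] at this
      rcases this with h | h
      · exact absurd h.symm hxb
      · exact h
    exact hdisj hbmem hbd
  have had : a ∉ (p.dropUntil x hx).support := by
    intro hamem
    have : a ∈ (p.dropUntil x hx).support.tail := by
      rw [support_eq_cons, List.mem_cons] at hamem
      rcases hamem with h | h
      · exact absurd h.symm hxa
      · exact h
    exact hdisj (p.takeUntil x hx).start_mem_support this
  constructor
  · exact ⟨(p.dropUntil x hx).reverse, by rw [support_reverse, List.mem_reverse]; exact had⟩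
  · exact ⟨p.takeUntil x hx, hbt⟩

lemma annulus_path (hT : G.IsTree) {v₁ v₂ a b : V} (ha : a ∈ Annulus G v₁ v₂)
    (hb : b ∈ Annulus G v₁ v₂) :
    ∃ p : G.Walk a b, p.IsPath ∧ ∀ x ∈ p.support, x ∈ Annulus G v₁ v₂ := by
  obtain ⟨wa1, hwa1⟩ := ha.1
  obtain ⟨wa2, hwa2⟩ := ha.2
  obtain ⟨wb1, hwb1⟩ := hb.1
  obtain ⟨wb2, hwb2⟩ := hb.2
  set W₁ : G.Walk a b := wa1.reverse.append wb1 with hW₁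
  set W₂ : G.Walk a b := wa2.reverse.append wb2 with hW₂
  have hv₁ : v₁ ∉ W₁.support := by
    rw [hW₁, mem_support_append_iff, support_reverse, List.mem_reverse]
    push_neg; exact ⟨hwa1, hwb1⟩
  have hv₂ : v₂ ∉ W₂.support := by
    rw [hW₂, mem_support_append_iff, support_reverse, List.mem_reverse]
    push_neg; exact ⟨hwa2, hwb2⟩
  have heq : W₁.bypass = W₂.bypass :=
    (hT.existsUnique_path a b).unique W₁.bypass_isPath W₂.bypass_isPath
  refine ⟨W₁.bypass, W₁.bypass_isPath, ?_⟩
  intro x hx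
  have hx2 : x ∈ W₂.bypass.support := heq ▸ hx
  have h1 : v₁ ∉ W₁.bypass.support := fun h => hv₁ (W₁.support_bypass_subset h)
  have h2 : v₂ ∉ W₂.bypass.support := fun h => hv₂ (W₂.support_bypass_subset h)
  constructor
  · refine ⟨wa1.append (W₁.bypass.takeUntil x hx), ?_⟩
    rw [mem_support_append_iff]
    push_neg
    exact ⟨hwa1, fun h => h1 ((W₁.bypass.support_takeUntil_subset hx) h)⟩
  · refine ⟨wa2.append (W₂.bypass.takeUntil x hx2), ?_⟩
    rw [mem_support_append_iff]
    push_neg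
    exact ⟨hwa2, fun h => h2 ((W₂.bypass.support_takeUntil_subset hx2) h)⟩

end Stmt8Aux

namespace Stmt8Aux
open SimpleGraph Walk

variable {V : Type*} {W₂ : Type*} {G : SimpleGraph V}

/-- No backtracking of images along a list of vertices. -/
def NoTriple (f : V → W₂) : List V → Prop
  | a :: x :: y :: r => f a ≠ f y ∧ NoTriple f (x :: y :: r)
  | _ => True

lemma noTriple_tail {f : V → W₂} : ∀ {l : List V} {c : V}, NoTriple f (c :: l) → NoTriple f l
  | [], _, _ => trivial
  | [_], _, _ => trivial
  | _ :: _ :: _, _, h => h.2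

variable {V' : Type*} {G' : SimpleGraph V'}

lemma foldFree_isPath (hac : G'.IsAcyclic) (f : G →g G') :
    ∀ {a b : V} (p : G.Walk a b), NoTriple (f : V → V') p.support → (p.map f).IsPath := by
  intro a b p
  induction p with
  | nil => intro _; simp
  | @cons a x b h q ih =>
    intro hnt
    have hq : NoTriple (f : V → V') q.support := by
      rw [support_cons] at hnt
      exact noTriple_tail hnt
    have hqp := ih hq
    rw [Walk.map_cons, Walk.cons_isPath_iff]
    refine ⟨hqp, ?_⟩
    intro hmem
    cases q with
    | nil =>
      simp only [Walk.map_nil, support_nil, List.mem_singleton] at hmem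
      exact (f.map_adj h).ne hmem
    | @cons x y b h' r =>
      have hay : f a ≠ f y := by
        rw [support_cons, support_cons, support_eq_cons r] at hnt
        exact hnt.1
      set m := (Walk.cons h' r).map f with hm
      have hfax : f a ≠ f x := (f.map_adj h).ne
      have hP₁ : (Walk.cons (f.map_adj h).symm Walk.nil : G'.Walk (f x) (f a)).IsPath := by
        simp [((f.map_adj h).symm).ne]
      have hP₂ : (m.takeUntil (f a) hmem).IsPath := hqp.takeUntil hmem
      have huniq := hac.path_unique ⟨m.takeUntil (f a) hmem, hP₂⟩
        ⟨Walk.cons (f.map_adj h).symm Walk.nil, hP₁⟩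
      have hsup : (m.takeUntil (f a) hmem).support = [f x, f a] := by
        have := congrArg (fun (q : G'.Path (f x) (f a)) => q.1.support) huniq
        simpa using this
      have hspec := m.take_spec hmem
      have hms : m.support = (m.takeUntil (f a) hmem).support
          ++ (m.dropUntil (f a) hmem).support.tail := by
        conv_lhs => rw [← hspec]
        rw [support_append]
      rw [hsup] at hms
      have hms2 : m.support = f x :: f y :: (r.map f).support.tail := by
        rw [hm, Walk.map_cons, support_cons]
        conv_lhs => rw [support_eq_cons (r.map f)]
      rw [hms2] at hms
      injection hms with _ hms
      injection hms with hms _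
      exact hay hms.symm

lemma exists_fold (f : V → W₂) :
    ∀ {a b : V} (p : G.Walk a b), p.IsPath → ¬ NoTriple f p.support →
    ∃ x y z, G.Adj x y ∧ G.Adj y z ∧ x ≠ z ∧ f x = f z ∧ y ∈ p.support := by
  intro a b p
  induction p with
  | nil => intro _ h; exact absurd trivial h
  | @cons a x b h q ih =>
    intro hp hnt
    cases q with
    | nil => exact absurd trivial hnt
    | @cons x y b h' r =>
      rw [support_cons, support_cons, support_eq_cons r] at hnt
      by_cases hfa : f a = f y
      · refine ⟨a, x, y, h, h', ?_, hfa, ?_⟩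
        · intro hay
          rw [Walk.cons_isPath_iff] at hp
          apply hp.2
          rw [support_cons]
          exact List.mem_cons_of_mem _ (hay ▸ r.start_mem_support)
        · rw [support_cons]
          exact List.mem_cons_of_mem _ (Walk.cons h' r).start_mem_support
      · have hnt2 : ¬ NoTriple f (Walk.cons h' r).support := by
          intro hcon
          apply hnt
          refine ⟨hfa, ?_⟩
          rw [support_cons, support_eq_cons r] at hcon
          exact hcon
        obtain ⟨x', y', z', h1, h2, h3, h4, h5⟩ := ih hp.of_cons hnt2
        exact ⟨x', y', z', h1, h2, h3, h4, by
          rw [support_cons]; exact List.mem_cons_of_mem _ h5⟩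

end Stmt8Aux

namespace Stmt8Aux
open SimpleGraph Walk

lemma not_isLf {V : Type*} {G : SimpleGraph V} {y p q : V} (hp : G.Adj y p) (hq : G.Adj y q)
    (hne : p ≠ q) : ¬ IsLf G y := fun ⟨u, _, huniq⟩ => hne ((huniq p hp).trans (huniq q hq).symm)

variable {V W : Type*} [Fintype V] [Fintype W] (C : STCover V W)

/-- The graph homomorphism underlying a cover. -/
def chom : C.TY →g C.TZ := ⟨C.F, fun {_ _} h => C.map_adj h⟩

@[simp] lemma chom_apply (x : V) : (chom C) x = C.F x := rfl

lemma edeg_le {y p : V} (hy : ¬ IsLf C.TY y) (hp : C.TY.Adj y p) :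
    C.edeg y p ≤ C.vdeg y := by
  have hfs := C.fiber_sum y (C.F p) hy (C.map_adj hp)
  rw [← hfs]
  exact Finset.single_le_sum (fun i _ => Nat.zero_le _)
    (Finset.mem_filter.2 ⟨Finset.mem_univ _, hp, rfl⟩)

lemma edeg_add_le {y p q : V} (hy : ¬ IsLf C.TY y) (hp : C.TY.Adj y p) (hq : C.TY.Adj y q)
    (hne : p ≠ q) (hF : C.F p = C.F q) : C.edeg y p + C.edeg y q ≤ C.vdeg y := by
  have hfs := C.fiber_sum y (C.F p) hy (C.map_adj hp)
  rw [← hfs]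
  have hsub : ({p, q} : Finset V) ⊆ Finset.univ.filter (fun u => C.TY.Adj y u ∧ C.F u = C.F p) := by
    intro z hz
    rcases Finset.mem_insert.1 hz with rfl | hz
    · exact Finset.mem_filter.2 ⟨Finset.mem_univ _, hp, rfl⟩
    · rw [Finset.mem_singleton] at hz
      subst hz
      exact Finset.mem_filter.2 ⟨Finset.mem_univ _, hq, hF.symm⟩
  calc C.edeg y p + C.edeg y q = ∑ u ∈ ({p, q} : Finset V), C.edeg y u :=
        (Finset.sum_pair hne).symm
    _ ≤ _ := Finset.sum_le_sum_of_subset hsub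

lemma fiber_nonempty {y : V} (hy : ¬ IsLf C.TY y) {t : W} (ht : C.TZ.Adj (C.F y) t) :
    ∃ u, C.TY.Adj y u ∧ C.F u = t := by
  have hfs := C.fiber_sum y t hy ht
  by_contra hcon
  push_neg at hcon
  have hemp : Finset.univ.filter (fun u => C.TY.Adj y u ∧ C.F u = t) = ∅ := by
    apply Finset.filter_eq_empty_iff.2
    rintro x _ ⟨h1, h2⟩
    exact hcon x h1 h2
  rw [hemp, Finset.sum_empty] at hfs
  have := C.vdeg_pos y
  omega

lemma propagation : ∀ (n : ℕ) (v x : V), C.TY.Adj v x → 2 ≤ C.edeg v x →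
    (Branch C.TY v x).ncard ≤ n → ∃ ℓ ∈ Branch C.TY v x, IsLf C.TY ℓ ∧ 2 ≤ C.vdeg ℓ := by
  intro n
  induction n with
  | zero =>
    intro v x hadj _ hcard
    exfalso
    have hx : x ∈ Branch C.TY v x := mem_branch_self hadj.ne'
    have := (Set.ncard_pos (Set.toFinite _)).2 ⟨x, hx⟩
    omega
  | succ n ih =>
    intro v x hadj hdeg hcard
    by_cases hlf : IsLf C.TY x
    · refine ⟨x, mem_branch_self hadj.ne', hlf, ?_⟩
      rw [C.leaf_vdeg x v hlf hadj.symm, C.edeg_symm x v]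
      exact hdeg
    · have h1 : C.edeg x v ≤ C.vdeg x := edeg_le C hlf hadj.symm
      have h1' : 2 ≤ C.edeg x v := by rw [C.edeg_symm x v]; exact hdeg
      have hD : 2 ≤ C.vdeg x := le_trans h1' h1
      have hRH := C.RH_local x hlf
      have hex : ∃ u, C.TY.Adj x u ∧ u ≠ v ∧ 2 ≤ C.edeg x u := by
        by_contra hcon
        push_neg at hcon
        have hsum : ∑ u ∈ Finset.univ.filter (fun u => C.TY.Adj x u), (C.edeg x u - 1)
            = C.edeg x v - 1 := by
          apply Finset.sum_eq_single_of_mem v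
            (Finset.mem_filter.2 ⟨Finset.mem_univ _, hadj.symm⟩)
          intro b hb hbv
          have := hcon b (Finset.mem_filter.1 hb).2 hbv
          omega
        omega
      obtain ⟨u, hxu, huv, hu2⟩ := hex
      have hsub : Branch C.TY x u ⊆ Branch C.TY v x := branch_mono C.treeY hadj hxu huv
      have hss : Branch C.TY x u ⊂ Branch C.TY v x :=
        ⟨hsub, fun hcontra => center_not_mem (hcontra (mem_branch_self hadj.ne'))⟩
      have hlt := Set.ncard_lt_ncard hss (Set.toFinite _)
      obtain ⟨ℓ, hℓ, h3, h4⟩ := ih x u hxu hu2 (by omega)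
      exact ⟨ℓ, hsub hℓ, h3, h4⟩

lemma fold_spare {y p q : V} (hy : ¬ IsLf C.TY y) (hp : C.TY.Adj y p) (hq : C.TY.Adj y q)
    (hpq : p ≠ q) (hF : C.F p = C.F q) (r : V) :
    ∃ z, C.TY.Adj y z ∧ z ≠ p ∧ z ≠ q ∧ z ≠ r ∧ 2 ≤ C.edeg y z := by
  by_contra hcon
  push_neg at hcon
  have hRH := C.RH_local y hy
  have hac : C.edeg y p + C.edeg y q ≤ C.vdeg y := edeg_add_le C hy hp hq hpq hF
  have hD : 1 ≤ C.vdeg y := C.vdeg_pos y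
  have ha1 : 1 ≤ C.edeg y p := C.edeg_pos hp
  have hc1 : 1 ≤ C.edeg y q := C.edeg_pos hq
  set S := Finset.univ.filter (fun u => C.TY.Adj y u) with hS
  have hpS : p ∈ S := Finset.mem_filter.2 ⟨Finset.mem_univ _, hp⟩
  have hqS : q ∈ S.erase p := Finset.mem_erase.2 ⟨Ne.symm hpq, Finset.mem_filter.2 ⟨Finset.mem_univ _, hq⟩⟩
  have hsplit : ∑ u ∈ S, (C.edeg y u - 1) =
      (C.edeg y p - 1) + ((C.edeg y q - 1) + ∑ u ∈ (S.erase p).erase q, (C.edeg y u - 1)) := by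
    rw [← Finset.add_sum_erase _ _ hpS, ← Finset.add_sum_erase _ _ hqS]
  by_cases hr : C.TY.Adj y r
  · have hrest : ∑ u ∈ (S.erase p).erase q, (C.edeg y u - 1) ≤ C.edeg y r - 1 := by
      have hz : ∀ x ∈ (S.erase p).erase q, (C.edeg y x - 1) ≠ 0 → x = r := by
        intro x hx hne0
        have hxq := (Finset.mem_erase.1 hx).1
        have hxp := (Finset.mem_erase.1 (Finset.mem_erase.1 hx).2).1
        have hxS := (Finset.mem_erase.1 (Finset.mem_erase.1 hx).2).2
        have hxadj := (Finset.mem_filter.1 hxS).2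
        by_contra hxr
        have := hcon x hxadj hxp hxq hxr
        omega
      calc ∑ u ∈ (S.erase p).erase q, (C.edeg y u - 1)
          = ∑ u ∈ ((S.erase p).erase q).filter (· = r), (C.edeg y u - 1) :=
            (Finset.sum_filter_of_ne hz).symm
        _ ≤ ∑ u ∈ ({r} : Finset V), (C.edeg y u - 1) :=
            Finset.sum_le_sum_of_subset (by
              intro x hx
              rw [Finset.mem_singleton]
              exact (Finset.mem_filter.1 hx).2)
        _ = C.edeg y r - 1 := Finset.sum_singleton _ _
    have hbr : C.edeg y r ≤ C.vdeg y := edeg_le C hy hr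
    have hbr1 : 1 ≤ C.edeg y r := C.edeg_pos hr
    omega
  · have hrest : ∑ u ∈ (S.erase p).erase q, (C.edeg y u - 1) = 0 := by
      apply Finset.sum_eq_zero
      intro x hx
      have hxq := (Finset.mem_erase.1 hx).1
      have hxp := (Finset.mem_erase.1 (Finset.mem_erase.1 hx).2).1
      have hxS := (Finset.mem_erase.1 (Finset.mem_erase.1 hx).2).2
      have hxadj := (Finset.mem_filter.1 hxS).2
      have hxr : x ≠ r := by rintro rfl; exact hr hxadj
      have := hcon x hxadj hxp hxq hxr
      omega
    omega

end Stmt8Aux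

namespace Stmt8Aux
open SimpleGraph Walk

variable {V W : Type*} [Fintype V] [Fintype W] (C : STCover V W)

lemma no_fold {v₁ v₂ y p q r : V}
    (hnc : ∀ u ∈ Annulus C.TY v₁ v₂, ¬ C.CritLeaf u)
    (hy : y ∈ Annulus C.TY v₁ v₂)
    (hp : C.TY.Adj y p) (hq : C.TY.Adj y q) (hr : C.TY.Adj y r) (hpq : p ≠ q)
    (hv₁ : v₁ ∈ Branch C.TY y p ∨ v₁ ∈ Branch C.TY y q ∨ v₁ ∈ Branch C.TY y r)
    (hv₂ : v₂ ∈ Branch C.TY y p ∨ v₂ ∈ Branch C.TY y q ∨ v₂ ∈ Branch C.TY y r) :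
    C.F p ≠ C.F q := by
  intro hF
  have hnl : ¬ IsLf C.TY y := not_isLf hp hq hpq
  obtain ⟨z, hz, hzp, hzq, hzr, hz2⟩ := fold_spare C hnl hp hq hpq hF r
  have hbv₁ : v₁ ∉ Branch C.TY y z := by
    intro hmem
    rcases hv₁ with h | h | h
    · exact hzp (branch_disjoint C.treeY hz hp hmem h)
    · exact hzq (branch_disjoint C.treeY hz hq hmem h)
    · exact hzr (branch_disjoint C.treeY hz hr hmem h)
  have hbv₂ : v₂ ∉ Branch C.TY y z := by
    intro hmem
    rcases hv₂ with h | h | h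
    · exact hzp (branch_disjoint C.treeY hz hp hmem h)
    · exact hzq (branch_disjoint C.treeY hz hq hmem h)
    · exact hzr (branch_disjoint C.treeY hz hr hmem h)
  have hsubA : Branch C.TY y z ⊆ Annulus C.TY v₁ v₂ := branch_to_annulus hy hz hbv₁ hbv₂
  obtain ⟨ℓ, hℓ, hlf, hvd⟩ := propagation C _ y z hz hz2 le_rfl
  exact hnc ℓ (hsubA hℓ) ⟨hlf, hvd⟩

lemma branch_image : ∀ (n : ℕ) (v w : V), C.TY.Adj v w → (Branch C.TY v w).ncard ≤ n →
    (∀ u ∈ Branch C.TY v w, ¬ C.CritLeaf u) →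
    C.F '' Branch C.TY v w = Branch C.TZ (C.F v) (C.F w) := by
  intro n
  induction n with
  | zero =>
    intro v w hvw hcard _
    exfalso
    have hx : w ∈ Branch C.TY v w := mem_branch_self hvw.ne'
    have := (Set.ncard_pos (Set.toFinite _)).2 ⟨w, hx⟩
    omega
  | succ n ih =>
    intro v w hvw hcard hnc
    by_cases hlf : IsLf C.TY w
    · rw [leaf_branch_singleton hlf hvw,
        leaf_branch_singleton (C.map_leaf w hlf) (C.map_adj hvw), Set.image_singleton]
    · have hfold : ∀ u, C.TY.Adj w u → u ≠ v → C.F u ≠ C.F v := by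
        intro u hu hune hF
        obtain ⟨z, hz, hzu, hzv, _, hz2⟩ := fold_spare C hlf hu hvw.symm hune hF v
        have hsub := branch_mono C.treeY hvw hz hzv
        obtain ⟨ℓ, hℓ, hlfℓ, hvdℓ⟩ := propagation C _ w z hz hz2 le_rfl
        exact hnc ℓ (hsub hℓ) ⟨hlfℓ, hvdℓ⟩
      have hsubcard : ∀ u, C.TY.Adj w u → u ≠ v → (Branch C.TY w u).ncard ≤ n := by
        intro u hu hune
        have hsub := branch_mono C.treeY hvw hu hune
        have hss : Branch C.TY w u ⊂ Branch C.TY v w :=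
          ⟨hsub, fun hcontra => center_not_mem (hcontra (mem_branch_self hvw.ne'))⟩
        have := Set.ncard_lt_ncard hss (Set.toFinite _)
        omega
      apply Set.Subset.antisymm
      · rintro z ⟨x, hx, rfl⟩
        by_cases hxw : x = w
        · subst hxw
          exact mem_branch_self (C.map_adj hvw).ne'
        · obtain ⟨u, hu, hune, hxu⟩ := second_vertex C.treeY hvw hx hxw
          have himg := ih w u hu (hsubcard u hu hune)
            (fun t ht => hnc t (branch_mono C.treeY hvw hu hune ht))
          have hmem : C.F x ∈ Branch C.TZ (C.F w) (C.F u) := himg ▸ ⟨x, hxu, rfl⟩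
          exact branch_mono C.treeZ (C.map_adj hvw) (C.map_adj hu) (hfold u hu hune) hmem
      · intro z hz
        by_cases hzw : z = C.F w
        · exact ⟨w, mem_branch_self hvw.ne', hzw.symm⟩
        · obtain ⟨t, ht, htv, hzt⟩ := second_vertex C.treeZ (C.map_adj hvw) hz hzw
          obtain ⟨u, hu, hFu⟩ := fiber_nonempty C hlf ht
          have hune : u ≠ v := by
            rintro rfl
            exact htv hFu.symm
          have himg := ih w u hu (hsubcard u hu hune)
            (fun s hs => hnc s (branch_mono C.treeY hvw hu hune hs))
          rw [← hFu] at hzt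
          have hmem : z ∈ C.F '' Branch C.TY w u := himg ▸ hzt
          obtain ⟨x, hxmem, rfl⟩ := hmem
          exact ⟨x, branch_mono C.treeY hvw hu hune hxmem, rfl⟩

end Stmt8Aux

namespace Stmt8Aux
open SimpleGraph Walk

variable {V W : Type*} [Fintype V] [Fintype W] (C : STCover V W)

lemma main_S : ∀ {v₁ v₂ : V} (P : C.TY.Walk v₁ v₂), P.IsPath → v₁ ≠ v₂ →
    (∀ u ∈ Annulus C.TY v₁ v₂, ¬ C.CritLeaf u) →
    (P.map (chom C)).IsPath ∧
    C.F '' Annulus C.TY v₁ v₂ = Annulus C.TZ (C.F v₁) (C.F v₂) := by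
  intro v₁ v₂ P
  induction P with
  | nil => intro _ hne _; exact absurd rfl hne
  | @cons v₁ u v₂ h P' ih =>
    intro hP hne hnc
    cases P' with
    | nil =>
      constructor
      · simp [Walk.map_cons, Walk.cons_isPath_iff, (C.map_adj h).ne]
        exact Walk.IsPath.nil.cons (by simp [(C.map_adj h).ne])
      · rw [annulus_adj_empty C.treeY h, annulus_adj_empty C.treeZ (C.map_adj h),
          Set.image_empty]
    | @cons _ u₂ _ h' P'' =>
      have hTY := C.treeY
      have hTZ := C.treeZ
      rw [Walk.cons_isPath_iff] at hP
      obtain ⟨hP', hv₁nP'⟩ := hP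
      have hP'2 := hP'
      rw [Walk.cons_isPath_iff] at hP'2
      obtain ⟨hP'', hu_nP''⟩ := hP'2
      have huv₂ : u ≠ v₂ := fun heq => hu_nP'' (heq ▸ P''.end_mem_support)
      have hv₁u₂ : v₁ ≠ u₂ := fun heq => hv₁nP'
        (by rw [support_cons]; exact List.mem_cons_of_mem _ (heq ▸ P''.start_mem_support))
      have f5 : v₂ ∈ Branch C.TY u u₂ := ⟨P'', hu_nP''⟩
      have f8 : u ∈ Annulus C.TY v₁ v₂ := by
        constructor
        · exact ⟨(Walk.cons h' P'').reverse, by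
            rw [support_reverse, List.mem_reverse]; exact hv₁nP'⟩
        · exact ⟨Walk.cons h Walk.nil, by
            simp only [support_cons, support_nil, List.mem_cons, List.not_mem_nil]
            push_neg
            exact ⟨Ne.symm hne, Ne.symm huv₂, trivial⟩⟩
      have f7 : ¬ IsLf C.TY u := not_isLf h.symm h' hv₁u₂
      have f10 : v₁ ∉ Branch C.TY u u₂ :=
        not_mem_branch_of_adj hTY h' h.symm (Ne.symm hv₁u₂)
      have hBuv₂ : Branch C.TY u v₂ = Branch C.TY u u₂ := (branch_eq f5).symm
      have f10' : v₁ ∉ Branch C.TY u v₂ := hBuv₂ ▸ f10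
      have f11 : Annulus C.TY u v₂ ⊆ Annulus C.TY v₁ v₂ := annulus_sub hTY h huv₂ f10'
      have hnc' : ∀ x ∈ Annulus C.TY u v₂, ¬ C.CritLeaf x := fun x hx => hnc x (f11 hx)
      obtain ⟨hi', hii'⟩ := ih hP' huv₂ hnc'
      have hZadj1 : C.TZ.Adj (C.F v₁) (C.F u) := C.map_adj h
      have hZadj2 : C.TZ.Adj (C.F u) (C.F u₂) := C.map_adj h'
      have g1 : C.F v₁ ≠ C.F u₂ :=
        no_fold C hnc f8 h.symm h' h.symm hv₁u₂
          (Or.inl (mem_branch_self h.ne)) (Or.inr (Or.inl f5))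
      have g2 : ∀ s, C.TY.Adj u s → s ≠ v₁ → s ≠ u₂ →
          C.F s ≠ C.F v₁ ∧ C.F s ≠ C.F u₂ := by
        intro s hs hs1 hs2
        constructor
        · exact no_fold C hnc f8 hs h.symm h' hs1
            (Or.inr (Or.inl (mem_branch_self h.ne))) (Or.inr (Or.inr f5))
        · exact no_fold C hnc f8 hs h' h.symm hs2
            (Or.inr (Or.inr (mem_branch_self h.ne))) (Or.inr (Or.inl f5))
      have g4 : C.F v₂ ∈ Branch C.TZ (C.F u) (C.F u₂) := by
        have h1 : C.F u ∉ (P''.map (chom C)).support := by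
          have htmp := hi'
          rw [Walk.map_cons, Walk.cons_isPath_iff] at htmp
          exact htmp.2
        exact ⟨P''.map (chom C), h1⟩
      have g6 : C.F v₁ ∉ Branch C.TZ (C.F u) (C.F u₂) :=
        not_mem_branch_of_adj hTZ hZadj2 hZadj1.symm (Ne.symm g1)
      have g5 : Branch C.TZ (C.F u) (C.F v₂) = Branch C.TZ (C.F u) (C.F u₂) :=
        (branch_eq g4).symm
      have g6' : C.F v₁ ∉ Branch C.TZ (C.F u) (C.F v₂) := g5 ▸ g6
      have g7 : C.F u ≠ C.F v₂ := Ne.symm (ne_center g4)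
      have g8 : C.F v₁ ≠ C.F v₂ := fun heq => g6 (heq ▸ g4)
      have hFP'sup : ∀ x ∈ (Walk.cons h' P'').support, C.F x ≠ C.F v₁ := by
        intro x hx
        rcases List.mem_cons.1 (by rw [support_cons] at hx; exact hx) with rfl | hx2
        · exact hZadj1.ne'
        · by_cases hxv₂ : x = v₂
          · subst hxv₂; exact Ne.symm g8
          · have hxu : x ≠ u := fun heq => hu_nP'' (heq ▸ hx2)
            have hxA : x ∈ Annulus C.TY u v₂ := interior_mem_annulus hP'
              (by rw [support_cons]; exact List.mem_cons_of_mem _ hx2) hxu hxv₂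
            have hmem : C.F x ∈ Annulus C.TZ (C.F u) (C.F v₂) := hii' ▸ ⟨x, hxA, rfl⟩
            intro heq
            exact g6' (heq ▸ hmem.1)
      have goal_i : ((Walk.cons h (Walk.cons h' P'')).map (chom C)).IsPath := by
        rw [Walk.map_cons, Walk.cons_isPath_iff]
        refine ⟨hi', ?_⟩
        rw [Walk.support_map]
        intro hmem
        obtain ⟨x, hx, hfx⟩ := List.mem_map.1 hmem
        exact hFP'sup x hx hfx
      have hFuA : C.F u ∈ Annulus C.TZ (C.F v₁) (C.F v₂) := by
        constructor
        · refine ⟨((Walk.cons h' P'').map (chom C)).reverse, ?_⟩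
          erw [support_reverse, List.mem_reverse, Walk.support_map]
          intro hmem
          obtain ⟨x, hx, hfx⟩ := List.mem_map.1 hmem
          exact hFP'sup x hx hfx
        · exact ⟨Walk.cons hZadj1 Walk.nil, by
            simp only [support_cons, support_nil, List.mem_cons, List.not_mem_nil]
            push_neg
            exact ⟨Ne.symm g8, Ne.symm g7, trivial⟩⟩
      have hside : ∀ s, C.TY.Adj u s → s ≠ v₁ → v₂ ∉ Branch C.TY u s →
          (Branch C.TY u s ⊆ Annulus C.TY v₁ v₂) ∧
          C.F '' Branch C.TY u s = Branch C.TZ (C.F u) (C.F s) ∧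
          Branch C.TZ (C.F u) (C.F s) ⊆ Annulus C.TZ (C.F v₁) (C.F v₂) := by
        intro s hs hs1 hs2
        have hsu₂ : s ≠ u₂ := fun heq => hs2 (heq ▸ f5)
        have hv₁B : v₁ ∉ Branch C.TY u s :=
          not_mem_branch_of_adj hTY hs h.symm hs1
        have hsubA : Branch C.TY u s ⊆ Annulus C.TY v₁ v₂ :=
          branch_to_annulus f8 hs hv₁B hs2
        have himg := branch_image C _ u s hs le_rfl (fun t ht => hnc t (hsubA ht))
        obtain ⟨hFs1, hFs2⟩ := g2 s hs hs1 hsu₂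
        have hZv₁ : C.F v₁ ∉ Branch C.TZ (C.F u) (C.F s) :=
          not_mem_branch_of_adj hTZ (C.map_adj hs) hZadj1.symm hFs1
        have hZv₂ : C.F v₂ ∉ Branch C.TZ (C.F u) (C.F s) := by
          intro hmem
          exact hFs2 (branch_disjoint hTZ (C.map_adj hs) hZadj2 hmem g4)
        exact ⟨hsubA, himg, branch_to_annulus hFuA (C.map_adj hs) hZv₁ hZv₂⟩
      refine ⟨goal_i, ?_⟩
      apply Set.Subset.antisymm
      · rintro z ⟨x, hx, rfl⟩
        have f9 : v₂ ∈ Branch C.TY v₁ u := ⟨Walk.cons h' P'', hv₁nP'⟩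
        rcases annulus_decomp hTY h f9 huv₂ hx with rfl | hx2 | ⟨s, hs, hs1, hs2, hx3⟩
        · exact hFuA
        · exact annulus_sub hTZ hZadj1 g7 g6' (hii' ▸ ⟨x, hx2, rfl⟩)
        · obtain ⟨_, himg, hZsub⟩ := hside s hs hs1 hs2
          exact hZsub (himg ▸ ⟨x, hx3, rfl⟩)
      · intro z hz
        have f9Z : C.F v₂ ∈ Branch C.TZ (C.F v₁) (C.F u) := by
          refine ⟨(Walk.cons h' P'').map (chom C), ?_⟩
          erw [Walk.support_map]
          intro hmem
          obtain ⟨x, hxx, hfx⟩ := List.mem_map.1 hmem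
          exact hFP'sup x hxx hfx
        rcases annulus_decomp hTZ hZadj1 f9Z g7 hz with rfl | hz2 | ⟨t, ht, ht1, ht2, hz3⟩
        · exact ⟨u, f8, rfl⟩
        · rw [← hii'] at hz2
          obtain ⟨x, hxm, rfl⟩ := hz2
          exact ⟨x, f11 hxm, rfl⟩
        · obtain ⟨s, hs, hFs⟩ := fiber_nonempty C f7 ht
          have hs1 : s ≠ v₁ := by
            rintro rfl
            exact ht1 hFs.symm
          have hs2 : v₂ ∉ Branch C.TY u s := by
            intro hmem
            have heqs := branch_disjoint hTY hs h' hmem f5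
            rw [heqs] at hFs
            rw [← hFs] at ht2
            exact ht2 g4
          obtain ⟨hYsub, himg, _⟩ := hside s hs hs1 hs2
          rw [← hFs] at hz3
          rw [← himg] at hz3
          obtain ⟨x, hxm, rfl⟩ := hz3
          exact ⟨x, hYsub hxm, rfl⟩

end Stmt8Aux

namespace Stmt8Aux

lemma length_pos_of_ne {V : Type*} {G : SimpleGraph V} {x y : V} (p : G.Walk x y)
    (h : x ≠ y) : 0 < p.length := by
  cases p with
  | nil => exact absurd rfl h
  | cons _ _ => simp

end Stmt8Aux


open Stmt8Aux

/-- if the annulus `A = ]]v₁,v₂[[` contains no critical leaf, then `F(A)` is an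
annulus, `A` is a connected component of `F⁻¹(F(A))`, and `F(Ā) = F(A)‾`.  If moreover `A`
contains no critical element at all, then `F` is injective on `A` and on its closure `Ā`. -/
theorem stmt8 {V W : Type*} [Fintype V] [Fintype W] (C : STCover V W)
    (v₁ v₂ : V) (hne : v₁ ≠ v₂) (h₁ : ¬ IsLf C.TY v₁) (h₂ : ¬ IsLf C.TY v₂)
    (hnc : ∀ u ∈ Annulus C.TY v₁ v₂, ¬ C.CritLeaf u) :
    C.F '' Annulus C.TY v₁ v₂ = Annulus C.TZ (C.F v₁) (C.F v₂) ∧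
    IsCompOf C.TY (Annulus C.TY v₁ v₂) (C.F ⁻¹' (C.F '' Annulus C.TY v₁ v₂)) ∧
    C.F '' (Annulus C.TY v₁ v₂ ∪ {v₁, v₂}) =
      Annulus C.TZ (C.F v₁) (C.F v₂) ∪ {C.F v₁, C.F v₂} ∧
    ((∀ u ∈ Annulus C.TY v₁ v₂, C.vdeg u = 1) →
      Set.InjOn C.F (Annulus C.TY v₁ v₂) ∧
      Set.InjOn C.F (Annulus C.TY v₁ v₂ ∪ {v₁, v₂})) := by
  classical
  obtain ⟨W0⟩ := C.treeY.isConnected.preconnected v₁ v₂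
  obtain ⟨hi, hii⟩ := main_S C W0.bypass W0.bypass_isPath hne hnc
  have hFne : C.F v₁ ≠ C.F v₂ := path_ends_ne hi
    (by erw [SimpleGraph.Walk.length_map]; exact length_pos_of_ne _ hne)
  have hFv₁ : C.F v₁ ∉ Annulus C.TZ (C.F v₁) (C.F v₂) := fun hm => center_not_mem hm.1
  have hFv₂ : C.F v₂ ∉ Annulus C.TZ (C.F v₁) (C.F v₂) := fun hm => center_not_mem hm.2
  refine ⟨hii, ?_, ?_, ?_⟩
  · refine ⟨Set.subset_preimage_image _ _, ?_, ?_⟩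
    · intro a ha b hb
      obtain ⟨p, _, hsup⟩ := annulus_path C.treeY ha hb
      exact ⟨p, fun x hx => Set.mem_preimage.2 ⟨x, hsup x hx, rfl⟩⟩
    · rintro a ha u ⟨p, hp⟩
      by_contra hu
      have hcases : u ∉ Branch C.TY v₁ v₂ ∨ u ∉ Branch C.TY v₂ v₁ := by
        by_contra hc
        push_neg at hc
        exact hu ⟨hc.1, hc.2⟩
      rcases hcases with hcase | hcase
      · have hv₁mem := separation ha.1 hcase p
        have hmem := hp v₁ hv₁mem
        rw [Set.mem_preimage, hii] at hmem
        exact hFv₁ hmem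
      · have hv₂mem := separation ha.2 hcase p
        have hmem := hp v₂ hv₂mem
        rw [Set.mem_preimage, hii] at hmem
        exact hFv₂ hmem
  · rw [Set.image_union, hii, Set.image_insert_eq, Set.image_singleton]
  · intro hd
    have hinjA : Set.InjOn C.F (Annulus C.TY v₁ v₂) := by
      intro a ha b hb hfe
      by_contra hab
      obtain ⟨p, hp, hsup⟩ := annulus_path C.treeY ha hb
      have hnotpath : ¬ (p.map (chom C)).IsPath := fun hpath =>
        path_ends_ne hpath
          (by rw [SimpleGraph.Walk.length_map]; exact length_pos_of_ne _ hab) hfe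
      have hnt : ¬ NoTriple (C.F) p.support := fun hnt =>
        hnotpath (foldFree_isPath C.treeZ.IsAcyclic (chom C) p hnt)
      obtain ⟨x, y, z, hxy, hyz, hxz, hfxz, hymem⟩ := exists_fold C.F p hp hnt
      have hyA := hsup y hymem
      have h2v : 2 ≤ C.vdeg y := by
        have h2 := edeg_add_le C (not_isLf hxy.symm hyz hxz) hxy.symm hyz hxz hfxz
        have e1 := C.edeg_pos hxy.symm
        have e2 := C.edeg_pos hyz
        omega
      rw [hd y hyA] at h2v
      omega
    refine ⟨hinjA, ?_⟩
    intro a ha b hb hfe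
    have hAimg : ∀ x ∈ Annulus C.TY v₁ v₂, C.F x ∈ Annulus C.TZ (C.F v₁) (C.F v₂) :=
      fun x hx => hii ▸ ⟨x, hx, rfl⟩
    rcases ha with haA | ha12
    · rcases hb with hbA | hb12
      · exact hinjA haA hbA hfe
      · rcases hb12 with rfl | rfl
        · exact absurd (hfe ▸ hAimg a haA) hFv₁
        · exact absurd (hfe ▸ hAimg a haA) hFv₂
    · rcases hb with hbA | hb12
      · rcases ha12 with rfl | rfl
        · exact absurd (hfe.symm ▸ hAimg b hbA) hFv₁
        · exact absurd (hfe.symm ▸ hAimg b hbA) hFv₂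
      · rcases ha12 with rfl | rfl <;> rcases hb12 with rfl | rfl
        · rfl
        · exact absurd hfe hFne
        · exact absurd hfe.symm hFne
        · rfl
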